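/- arXiv:2303.16700 — 2 statements merged into one kernel-verified Lean document; each statement's English description precedes it below -/
import Mathlib

section
/- Let P be a set of n ≥ 3 points in general position in the plane. A thrackle of P is a set T of segments of P such that any two segments in T either share an endpoint or cross properly (intersect in a point interior to both). Then the maximum number of segments in a thrackle of P is either n−1 or n. -/
noncomputable section

/-- Points of the plane. -/
abbrev Pl := ℝ × ℝ

/-- `P` is in general position: no three (distinct) points of `P` are collinear. -/
def GenPos (P : Set Pl) : Prop :=
  ∀ a ∈ P, ∀ b ∈ P, ∀ c ∈ P, a ≠ b → a ≠ c → b ≠ c →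
    ¬ Collinear ℝ ({a, b, c} : Set Pl)

/-- The set of all closed straight-line segments with (distinct) endpoints in `P`. -/
def Segs (P : Set Pl) : Set (Set Pl) :=
  {s | ∃ a ∈ P, ∃ b ∈ P, a ≠ b ∧ s = segment ℝ a b}

/-- The edge disjointness graph of `P`: vertices are the segments of `P`,
two of them adjacent iff they are disjoint. -/
def DisjGraph (P : Set Pl) : SimpleGraph ↥(Segs P) where
  Adj s t := Disjoint (s : Set Pl) (t : Set Pl)
  symm := ⟨fun _ _ h => h.symm⟩
  loopless := by
    constructor
    rintro ⟨s, a, ha, b, hb, hab, rfl⟩ h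
    exact (Set.not_disjoint_iff.2
      ⟨a, left_mem_segment ℝ a b, left_mem_segment ℝ a b⟩) h

/-- An independent set of vertices: pairwise non-adjacent. -/
def IsIndepSet {V : Type*} (G : SimpleGraph V) (s : Set V) : Prop :=
  s.Pairwise fun a b => ¬ G.Adj a b

/-- Twice the signed area of the triangle `a b c`; its sign is the orientation. -/
def det3 (a b c : Pl) : ℝ :=
  (b.1 - a.1) * (c.2 - a.2) - (b.2 - a.2) * (c.1 - a.1)

/-- `p 0, …, p (n-1)` are in convex position, appearing in this
(counterclockwise) cyclic order on their convex hull. -/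
def ConvexCyclic {n : ℕ} (p : Fin n → Pl) : Prop :=
  ∀ i j k : Fin n, i < j → j < k → 0 < det3 (p i) (p j) (p k)

/-- `P` is in convex position: every point of `P` is a vertex of the convex hull. -/
def ConvexPos (P : Set Pl) : Prop :=
  ∀ x ∈ P, x ∉ convexHull ℝ (P \ {x})

/-- `P` and `Q` have the same order type. -/
def SameOrderType (P Q : Set Pl) : Prop :=
  ∃ γ : Pl → Pl, Set.BijOn γ P Q ∧
    ∀ a ∈ P, ∀ b ∈ P, ∀ c ∈ P,
      Real.sign (det3 a b c) = Real.sign (det3 (γ a) (γ b) (γ c))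

/-- A thrackle of `P`: a set of segments of `P`, any two of which intersect. -/
def IsThrackle (P : Set Pl) (T : Set (Set Pl)) : Prop :=
  T ⊆ Segs P ∧ ∀ s ∈ T, ∀ t ∈ T, s ≠ t → ¬ Disjoint s t

end

open Set

lemma det3_swap23 (a b c : Pl) : det3 a c b = -det3 a b c := by
  simp only [det3]; ring

lemma det3_swap12 (a b c : Pl) : det3 b a c = -det3 a b c := by
  simp only [det3]; ring

lemma collinear_of_det3 {p q a : Pl} (hpq : q ≠ p) (h : det3 p q a = 0) :
    Collinear ℝ ({p, q, a} : Set Pl) := by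
  rw [collinear_iff_of_mem (Set.mem_insert p _)]
  refine ⟨q - p, ?_⟩
  rintro x (rfl | rfl | rfl)
  · exact ⟨0, by simp⟩
  · exact ⟨1, by simp⟩
  · simp only [det3] at h
    by_cases h1 : q.1 = p.1
    · have h2 : q.2 - p.2 ≠ 0 := by
        intro h2
        exact hpq (Prod.ext h1 (by linarith))
      refine ⟨(x.2 - p.2)/(q.2 - p.2), ?_⟩
      have ha1 : x.1 = p.1 := by
        rw [h1] at h
        have : (q.2 - p.2) * (x.1 - p.1) = 0 := by linarith
        rcases mul_eq_zero.1 this with h' | h'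
        · exact absurd h' h2
        · linarith
      apply Prod.ext <;> simp [h1, ha1] <;> field_simp <;> ring
    · have h1' : q.1 - p.1 ≠ 0 := fun h' => h1 (by linarith)
      refine ⟨(x.1 - p.1)/(q.1 - p.1), ?_⟩
      apply Prod.ext <;> simp <;> field_simp <;> nlinarith [h]

lemma mem_segment_param {p a x : Pl} (hx : x ∈ segment ℝ p a) :
    ∃ θ : ℝ, 0 ≤ θ ∧ θ ≤ 1 ∧ x = p + θ • (a - p) := by
  rw [segment_eq_image'] at hx
  obtain ⟨θ, ⟨h0, h1⟩, rfl⟩ := hx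
  exact ⟨θ, h0, h1, rfl⟩

lemma det3_on_segment {p q a x : Pl} (hx : x ∈ segment ℝ p a) :
    ∃ θ : ℝ, 0 ≤ θ ∧ θ ≤ 1 ∧ x = p + θ • (a - p) ∧ det3 p q x = θ * det3 p q a := by
  obtain ⟨θ, h0, h1, rfl⟩ := mem_segment_param hx
  refine ⟨θ, h0, h1, rfl, ?_⟩
  simp only [det3, Prod.fst_add, Prod.snd_add, Prod.smul_fst, Prod.smul_snd,
    Prod.fst_sub, Prod.snd_sub, smul_eq_mul]
  ring

lemma seg_disjoint {p q a b : Pl} (hpq : p ≠ q)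
    (ha : det3 p q a < 0) (hb : 0 < det3 p q b) :
    Disjoint (segment ℝ p a) (segment ℝ q b) := by
  rw [Set.disjoint_left]
  intro x hxf hxg
  obtain ⟨θ, hθ0, _, hxp, hdet⟩ := det3_on_segment (q := q) hxf
  obtain ⟨σ, hσ0, _, hxq, hdet'⟩ := det3_on_segment (q := p) hxg
  have e1 : det3 q p x = -det3 p q x := det3_swap12 p q x
  have e2 : det3 q p b = -det3 p q b := det3_swap12 p q b
  have hx1 : det3 p q x ≤ 0 := by nlinarith
  have hx2 : 0 ≤ det3 p q x := by nlinarith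
  have hθ : θ = 0 := by nlinarith
  have hσ : σ = 0 := by nlinarith
  rw [hθ, zero_smul, add_zero] at hxp
  rw [hσ, zero_smul, add_zero] at hxq
  exact hpq (hxp ▸ hxq)

lemma seg_right_unique {a b b' : Pl} (hb : b ≠ a) (hb' : b' ≠ a)
    (h : segment ℝ a b = segment ℝ a b') : b = b' := by
  have h1 : b' ∈ segment ℝ a b := h ▸ right_mem_segment ℝ a b'
  have h2 : b ∈ segment ℝ a b' := h.symm ▸ right_mem_segment ℝ a b
  obtain ⟨θ, hθ0, hθ1, hb'eq⟩ := mem_segment_param h1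
  obtain ⟨σ, hσ0, hσ1, hbeq⟩ := mem_segment_param h2
  have key : b - a = (σ * θ) • (b - a) := by
    have : b' - a = θ • (b - a) := by rw [hb'eq]; abel
    calc b - a = σ • (b' - a) := by rw [hbeq]; abel
    _ = σ • (θ • (b - a)) := by rw [this]
    _ = (σ * θ) • (b - a) := (mul_smul σ θ _).symm
  have hba : b - a ≠ 0 := sub_ne_zero.2 hb
  have : (1 - σ * θ) • (b - a) = 0 := by
    rw [sub_smul, one_smul, ← key, sub_self]
  have hst : σ * θ = 1 := by
    rcases smul_eq_zero.1 this with h' | h'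
    · linarith
    · exact absurd h' hba
  have hθ : θ = 1 := by nlinarith
  rw [hb'eq, hθ, one_smul]; abel

/-- An extreme representation of a thrackle segment. -/
def ExtAt (P : Finset Pl) (T : Set (Set Pl)) (t : Set Pl) (p q : Pl) : Prop :=
  t = segment ℝ p q ∧ p ∈ P ∧ q ∈ P ∧ p ≠ q ∧
    ∀ a ∈ P, a ≠ p → segment ℝ p a ∈ T → segment ℝ p a ≠ t → 0 < det3 p q a

lemma det3_ne_zero {P : Finset Pl} (hgp : GenPos ↑P) {p q a : Pl}
    (hp : p ∈ P) (hq : q ∈ P) (ha : a ∈ P)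
    (hpq : p ≠ q) (hpa : p ≠ a) (hqa : q ≠ a) : det3 p q a ≠ 0 := fun h =>
  hgp p hp q hq a ha hpq hpa hqa (collinear_of_det3 (Ne.symm hpq) h)

lemma exists_ext {P : Finset Pl} (hgp : GenPos ↑P) {T : Set (Set Pl)}
    (hT : IsThrackle ↑P T) : ∀ t ∈ T, ∃ p q, ExtAt P T t p q := by
  obtain ⟨hsub, hint⟩ := hT
  intro t ht
  obtain ⟨p, hp, q, hq, hpq, rfl⟩ := hsub ht
  by_cases hcp : ∀ a ∈ P, a ≠ p → segment ℝ p a ∈ T →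
      segment ℝ p a ≠ segment ℝ p q → 0 < det3 p q a
  · exact ⟨p, q, rfl, hp, hq, hpq, hcp⟩
  by_cases hcq : ∀ b ∈ P, b ≠ q → segment ℝ q b ∈ T →
      segment ℝ q b ≠ segment ℝ p q → 0 < det3 q p b
  · exact ⟨q, p, segment_symm ℝ p q, hq, hp, hpq.symm, hcq⟩
  push_neg at hcp hcq
  obtain ⟨a, ha, hap, haT, hat, hdeta⟩ := hcp
  obtain ⟨b, hb, hbq, hbT, hbt, hdetb⟩ := hcq
  have haq : a ≠ q := fun h => hat (by rw [h])
  have hbp : b ≠ p := fun h => hbt (by rw [h, segment_symm])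
  have hda : det3 p q a < 0 :=
    lt_of_le_of_ne (hdeta)
      (det3_ne_zero hgp hp hq ha hpq (Ne.symm hap) (Ne.symm haq))
  have hdb : 0 < det3 p q b := by
    have h0 : det3 q p b ≠ 0 :=
      det3_ne_zero hgp hq hp hb hpq.symm (Ne.symm hbq) (Ne.symm hbp)
    have := det3_swap12 p q b
    have := hdetb
    by_contra h
    push_neg at h
    rcases lt_or_eq_of_le h with h' | h'
    · nlinarith [det3_swap12 p q b]
    · exact h0 (by rw [det3_swap12 p q b, h']; ring)
  have hdisj : Disjoint (segment ℝ p a) (segment ℝ q b) := seg_disjoint hpq hda hdb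
  have hfg : segment ℝ p a ≠ segment ℝ q b := by
    intro h
    have := Set.disjoint_left.1 hdisj (left_mem_segment ℝ p a)
    exact this (h ▸ left_mem_segment ℝ p a)
  exact (hint _ haT _ hbT hfg hdisj).elim

lemma thrackle_card_le (P : Finset Pl) (hgp : GenPos ↑P)
    {T : Set (Set Pl)} (hT : IsThrackle ↑P T) : T.ncard ≤ P.card := by
  classical
  have key := exists_ext hgp hT
  let F : Set Pl → Pl := fun t => if h : ∃ p q, ExtAt P T t p q then h.choose else 0
  let G : Set Pl → Pl := fun t =>
    if h : ∃ p q, ExtAt P T t p q then h.choose_spec.choose else 0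
  have hFG : ∀ t ∈ T, ExtAt P T t (F t) (G t) := by
    intro t ht
    have h : ∃ p q, ExtAt P T t p q := key t ht
    simp only [F, G, dif_pos h]
    exact h.choose_spec.choose_spec
  have hinj : Set.InjOn F T := by
    intro t1 h1 t2 h2 heq
    by_contra hne
    obtain ⟨e1, hF1, hG1, hpq1, hext1⟩ := hFG t1 h1
    obtain ⟨e2, hF2, hG2, hpq2, hext2⟩ := hFG t2 h2
    rw [← heq] at hpq2 hext2 e2
    -- t2 = segment (F t1) (G t2)
    have h12 : 0 < det3 (F t1) (G t1) (G t2) :=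
      hext1 (G t2) hG2 (Ne.symm hpq2) (e2 ▸ h2) (e2 ▸ (Ne.symm hne)) -- careful
    have h21 : 0 < det3 (F t1) (G t2) (G t1) :=
      hext2 (G t1) hG1 (Ne.symm hpq1) (e1 ▸ h1) (e1 ▸ hne)
    have := det3_swap23 (F t1) (G t1) (G t2)
    linarith
  have hsub : F '' T ⊆ ↑P := by
    rintro _ ⟨t, ht, rfl⟩
    exact (hFG t ht).2.1
  calc T.ncard = (F '' T).ncard := (Set.ncard_image_of_injOn hinj).symm
    _ ≤ (↑P : Set Pl).ncard := Set.ncard_le_ncard hsub (P.finite_toSet)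
    _ = P.card := Set.ncard_coe_finset P

lemma star_thrackle (P : Finset Pl) (hn : 3 ≤ P.card) :
    ∃ T : Set (Set Pl), IsThrackle ↑P T ∧ T.ncard = P.card - 1 := by
  have hne : P.Nonempty := Finset.card_pos.1 (by omega)
  obtain ⟨a, ha⟩ := hne
  refine ⟨(fun b => segment ℝ a b) '' ((↑P : Set Pl) \ {a}), ⟨?_, ?_⟩, ?_⟩
  · rintro _ ⟨b, ⟨hb, hba⟩, rfl⟩
    exact ⟨a, ha, b, hb, fun h => hba (h ▸ rfl), rfl⟩
  · rintro _ ⟨b, ⟨hb, hba⟩, rfl⟩ _ ⟨c, ⟨hc, hca⟩, rfl⟩ hne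
    exact Set.not_disjoint_iff.2 ⟨a, left_mem_segment ℝ a b, left_mem_segment ℝ a c⟩
  · have hinjOn : Set.InjOn (fun b => segment ℝ a b) ((↑P : Set Pl) \ {a}) := by
      rintro b ⟨hb, hba⟩ c ⟨hc, hca⟩ h
      exact seg_right_unique (fun h' => hba h') (fun h' => hca h') h
    rw [Set.ncard_image_of_injOn hinjOn,
      Set.ncard_diff_singleton_of_mem (show a ∈ (↑P : Set Pl) from ha),
      Set.ncard_coe_finset]

/-- the maximum size of a thrackle of `P` is `n - 1` or `n`. -/
theorem stmt_1 (P : Finset Pl) (hn : 3 ≤ P.card) (hgp : GenPos ↑P) :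
    ∃ m : ℕ, (m = P.card - 1 ∨ m = P.card) ∧
      (∀ T : Set (Set Pl), IsThrackle ↑P T → T.ncard ≤ m) ∧
      (∃ T : Set (Set Pl), IsThrackle ↑P T ∧ T.ncard = m) := by
  classical
  set S : Set ℕ := {k | ∃ T : Set (Set Pl), IsThrackle ↑P T ∧ T.ncard = k} with hS
  have hbdd : BddAbove S := by
    refine ⟨P.card, ?_⟩
    rintro k ⟨T, hT, rfl⟩
    exact thrackle_card_le P hgp hT
  have hSne : S.Nonempty := by
    obtain ⟨T, hT, hcard⟩ := star_thrackle P hn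
    exact ⟨P.card - 1, T, hT, hcard⟩
  have hmem : sSup S ∈ S := Nat.sSup_mem hSne hbdd
  have hub : ∀ T : Set (Set Pl), IsThrackle ↑P T → T.ncard ≤ sSup S := by
    intro T hT
    exact le_csSup hbdd ⟨T, hT, rfl⟩
  have hlow : P.card - 1 ≤ sSup S := by
    obtain ⟨T, hT, hcard⟩ := star_thrackle P hn
    exact le_csSup hbdd ⟨T, hT, hcard⟩
  have hhigh : sSup S ≤ P.card := by
    obtain ⟨T, hT, hcard⟩ := hmem
    exact hcard ▸ thrackle_card_le P hgp hT
  exact ⟨sSup S, by omega, hub, hmem⟩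
end

section
/- If G is a finite connected graph with independence number α(G) at most its vertex connectivity κ(G), then G is Hamiltonian (contains a spanning cycle), provided G has at least 3 vertices. -/
set_option linter.unusedSectionVars false
section CEAux
open SimpleGraph Walk

variable {V : Type*} [DecidableEq V] {G : SimpleGraph V}

private lemma ce_length_rotate {v u : V} (c : G.Walk v v) (h : u ∈ c.support) :
    (c.rotate u h).length = c.length := by
  have h1 := congr_arg Walk.length (c.take_spec h)
  rw [Walk.length_append] at h1
  rw [Walk.rotate, Walk.length_append]
  omega

private lemma ce_tail_ne_nil {x : V} {C : G.Walk x x} (hC : ¬ C.Nil) :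
    C.support.tail ≠ [] := by
  intro h0
  exact hC (Walk.nil_iff_support_eq.mpr (by rw [C.support_eq_cons, h0]))

/-- structure of a closed walk: `darts.map fst = x :: l'` and `support.tail = l' ++ [x]`. -/
private lemma ce_closed_structure {x : V} {C : G.Walk x x} (hC : ¬ C.Nil) :
    ∃ l' : List V, C.darts.map (·.fst) = x :: l' ∧ C.support.tail = l' ++ [x] := by
  have h1 : C.darts.map (·.fst) ++ [x] = C.support := C.map_fst_darts_append
  have h2 : C.support = x :: C.support.tail := C.support_eq_cons
  cases hL : C.darts.map (·.fst) with
  | nil =>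
    exfalso
    rw [hL] at h1
    exact hC (Walk.nil_iff_support_eq.mpr (by simpa using h1.symm))
  | cons z l' =>
    rw [hL, h2, List.cons_append] at h1
    injection h1 with hz htl
    exact ⟨l', by rw [hz], htl.symm⟩

private lemma ce_start_mem_tail {x : V} {C : G.Walk x x} (hC : ¬ C.Nil) :
    x ∈ C.support.tail := by
  obtain ⟨l', _, h2⟩ := ce_closed_structure hC
  rw [h2]; simp

private lemma ce_mem_support_iff {x : V} {C : G.Walk x x} (hC : ¬ C.Nil) {y : V} :
    y ∈ C.support ↔ y ∈ C.support.tail := by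
  constructor
  · intro h
    rw [C.support_eq_cons] at h
    rcases List.mem_cons.mp h with rfl | h
    · exact ce_start_mem_tail hC
    · exact h
  · exact List.mem_of_mem_tail

private lemma ce_darts_fst_nodup {x : V} {C : G.Walk x x} (hC : C.IsCycle) :
    (C.darts.map (·.fst)).Nodup := by
  obtain ⟨l', h1, h2⟩ := ce_closed_structure hC.not_nil
  have htail : C.support.tail.Nodup := hC.support_nodup
  rw [h2] at htail
  rw [h1]
  have h3 := List.nodup_append'.mp htail
  refine List.nodup_cons.mpr ⟨?_, h3.1⟩
  intro hx
  exact h3.2.2 hx (by simp)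

private lemma ce_darts_snd_nodup {x : V} {C : G.Walk x x} (hC : C.IsCycle) :
    (C.darts.map (·.snd)).Nodup := by
  rw [C.map_snd_darts]; exact hC.support_nodup

private lemma ce_dart_fst_inj {x : V} {C : G.Walk x x} (hC : C.IsCycle)
    {d e : G.Dart} (hd : d ∈ C.darts) (he : e ∈ C.darts) (h : d.fst = e.fst) : d = e :=
  List.inj_on_of_nodup_map (ce_darts_fst_nodup hC) hd he h

private lemma ce_dart_snd_inj {x : V} {C : G.Walk x x} (hC : C.IsCycle)
    {d e : G.Dart} (hd : d ∈ C.darts) (he : e ∈ C.darts) (h : d.snd = e.snd) : d = e :=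
  List.inj_on_of_nodup_map (ce_darts_snd_nodup hC) hd he h

private lemma ce_exists_dart {x : V} {C : G.Walk x x} (hC : ¬ C.Nil) {s : V}
    (hs : s ∈ C.support) : ∃ d ∈ C.darts, d.fst = s := by
  obtain ⟨l', h1, h2⟩ := ce_closed_structure hC
  have : s ∈ C.darts.map (·.fst) := by
    rw [h1]
    rw [C.support_eq_cons, h2] at hs
    rcases List.mem_cons.mp hs with rfl | hs
    · simp
    · rcases List.mem_append.mp hs with hs | hs
      · exact List.mem_cons_of_mem _ hs
      · simp at hs; rw [hs]; simp
  obtain ⟨d, hd, hds⟩ := List.mem_map.mp this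
  exact ⟨d, hd, hds⟩

/-- Surgery 1: replace the edge `a-b` of a cycle by a detour `a-h1-...-h2-b`
through fresh vertices, getting a strictly longer cycle. -/
private lemma ce_newcycle1 {a b h1 h2 : V} (hab : G.Adj a b) (Q : G.Walk b a)
    (hKc : (Walk.cons hab Q).IsCycle)
    (P : G.Walk h1 h2) (hP : P.IsPath)
    (hdisj : ∀ y ∈ P.support, y ∉ (Walk.cons hab Q).support)
    (ha1 : G.Adj a h1) (h2b : G.Adj h2 b) :
    ∃ (z : V) (N : G.Walk z z), N.IsCycle ∧ N.length = Q.length + P.length + 2 := by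
  have hQp : Q.IsPath := ((Walk.cons_isCycle_iff _ _).mp hKc).1
  have hQsub : ∀ y ∈ Q.support, y ∈ (Walk.cons hab Q).support := by
    intro y hy; rw [Walk.support_cons]; exact List.mem_cons_of_mem _ hy
  refine ⟨a, Walk.cons ha1 (P.append (Walk.cons h2b Q)), ?_, ?_⟩
  · rw [Walk.cons_isCycle_iff]
    constructor
    · rw [Walk.isPath_def, Walk.support_append, Walk.support_cons, List.tail_cons]
      refine List.Nodup.append hP.support_nodup hQp.support_nodup ?_
      intro y hyP hyQ
      exact hdisj y hyP (hQsub y hyQ)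
    · intro hmem
      rw [Walk.edges_append, Walk.edges_cons, List.mem_append] at hmem
      rcases hmem with hmem | hmem
      · exact hdisj a (P.fst_mem_support_of_mem_edges hmem)
          (Walk.start_mem_support _)
      · rcases List.mem_cons.mp hmem with hmem | hmem
        · rw [Sym2.eq_iff] at hmem
          rcases hmem with ⟨rfl, rfl⟩ | ⟨rfl, rfl⟩
          · exact hdisj a (P.end_mem_support) (Walk.start_mem_support _)
          · exact hab.ne rfl
        · exact hdisj h1 (Walk.start_mem_support _)
            (hQsub h1 (Q.snd_mem_support_of_mem_edges hmem))
  · simp [Walk.length_append]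
    omega

/-- Surgery 2: crossing detour through fresh vertices for a cycle
`a :: (b ...A1... t) :: (t,u) :: (u ...R... a)`, given `Adj u b`. -/
private lemma ce_newcycle2 {a b t u h1 h2 : V} (hab : G.Adj a b)
    (A1 : G.Walk b t) (htu : G.Adj t u) (R : G.Walk u a)
    (hKc : (Walk.cons hab (A1.append (Walk.cons htu R))).IsCycle)
    (P : G.Walk h2 h1) (hP : P.IsPath)
    (hdisj : ∀ y ∈ P.support, y ∉ (Walk.cons hab (A1.append (Walk.cons htu R))).support)
    (hh1a : G.Adj h1 a) (hth2 : G.Adj t h2) (hub : G.Adj u b)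
    (hta : t ≠ a) (htb : t ≠ b) :
    ∃ (z : V) (N : G.Walk z z), N.IsCycle ∧
      N.length = (Walk.cons hab (A1.append (Walk.cons htu R))).length + P.length + 1 := by
  set K := Walk.cons hab (A1.append (Walk.cons htu R)) with hK
  have hQp : (A1.append (Walk.cons htu R)).IsPath := ((Walk.cons_isCycle_iff _ _).mp hKc).1
  have hQsup : (A1.append (Walk.cons htu R)).support = A1.support ++ R.support := by
    rw [Walk.support_append, Walk.support_cons, List.tail_cons]
  have hA1K : ∀ y ∈ A1.support, y ∈ K.support := by
    intro y hy; rw [hK, Walk.support_cons, hQsup]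
    exact List.mem_cons_of_mem _ (List.mem_append.mpr (Or.inl hy))
  have hRK : ∀ y ∈ R.support, y ∈ K.support := by
    intro y hy; rw [hK, Walk.support_cons, hQsup]
    exact List.mem_cons_of_mem _ (List.mem_append.mpr (Or.inr hy))
  refine ⟨t, Walk.cons hth2 (P.append (Walk.cons hh1a
      (R.reverse.append (Walk.cons hub A1)))), ?_, ?_⟩
  · rw [Walk.cons_isCycle_iff]
    constructor
    · rw [Walk.isPath_def]
      have hsup : (P.append (Walk.cons hh1a (R.reverse.append (Walk.cons hub A1)))).support
          = P.support ++ (R.support.reverse ++ A1.support) := by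
        rw [Walk.support_append, Walk.support_cons, List.tail_cons, Walk.support_append,
          Walk.support_cons, List.tail_cons, Walk.support_reverse]
      rw [hsup]
      have hperm : List.Perm (R.support.reverse ++ A1.support) (A1.support ++ R.support) :=
        (R.support.reverse_perm.append_right _).trans List.perm_append_comm
      have hnd2 : (R.support.reverse ++ A1.support).Nodup := by
        rw [hperm.nodup_iff, ← hQsup]
        exact hQp.support_nodup
      refine List.Nodup.append hP.support_nodup hnd2 ?_
      intro y hyP hy2
      rcases List.mem_append.mp hy2 with hy2 | hy2
      · exact hdisj y hyP (hRK y (List.mem_reverse.mp hy2))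
      · exact hdisj y hyP (hA1K y hy2)
    · intro hmem
      have htK : t ∈ K.support := hA1K t A1.end_mem_support
      have hh2P : h2 ∈ P.support := Walk.start_mem_support _
      rw [Walk.edges_append, Walk.edges_cons, Walk.edges_append, Walk.edges_cons,
        List.mem_append] at hmem
      rcases hmem with hmem | hmem
      · exact hdisj t (P.fst_mem_support_of_mem_edges hmem) htK
      · rcases List.mem_cons.mp hmem with hmem | hmem
        · rw [Sym2.eq_iff] at hmem
          rcases hmem with ⟨rfl, rfl⟩ | ⟨rfl, rfl⟩
          · exact hdisj _ P.end_mem_support htK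
          · exact hta rfl
        · rcases List.mem_append.mp hmem with hmem | hmem
          · have : h2 ∈ R.reverse.support := R.reverse.snd_mem_support_of_mem_edges hmem
            rw [Walk.support_reverse, List.mem_reverse] at this
            exact hdisj h2 hh2P (hRK h2 this)
          · rcases List.mem_cons.mp hmem with hmem | hmem
            · rw [Sym2.eq_iff] at hmem
              rcases hmem with ⟨rfl, rfl⟩ | ⟨rfl, rfl⟩
              · exact htu.ne rfl
              · exact htb rfl
            · exact hdisj h2 hh2P
                (hA1K h2 (A1.snd_mem_support_of_mem_edges hmem))
  · rw [hK]
    simp [Walk.length_append, Walk.length_cons, Walk.length_reverse]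
    omega

/-- Build a cycle from a vertex `b` adjacent to both endpoints of a path avoiding `b`. -/
private lemma ce_cycle_of_adj_path {b x y : V} (hbx : G.Adj b x) (hby : G.Adj b y)
    (hxy : x ≠ y) (P : G.Walk x y) (hP : P.IsPath) (hbP : b ∉ P.support) :
    ∃ (z : V) (N : G.Walk z z), N.IsCycle := by
  refine ⟨b, Walk.cons hbx (P.append (Walk.cons hby.symm Walk.nil)), ?_⟩
  rw [Walk.cons_isCycle_iff]
  constructor
  · rw [Walk.isPath_def, Walk.support_append, Walk.support_cons, Walk.support_nil,
      List.tail_cons]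
    refine List.Nodup.append hP.support_nodup (List.nodup_singleton b) ?_
    intro z hz hzb
    rw [List.mem_singleton] at hzb
    subst hzb
    exact hbP hz
  · intro hmem
    rw [Walk.edges_append, List.mem_append, Walk.edges_cons, Walk.edges_nil] at hmem
    rcases hmem with hmem | hmem
    · exact hbP (P.fst_mem_support_of_mem_edges hmem)
    · rw [List.mem_singleton, Sym2.eq_iff] at hmem
      rcases hmem with ⟨rfl, rfl⟩ | ⟨-, rfl⟩
      · exact hby.ne rfl
      · exact hxy rfl

end CEAux

/-- Chvátal–Erdős: if `α(G) ≤ κ(G)` for a finite connected graph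
`G` on at least 3 vertices, then `G` is hamiltonian.  The hypothesis
`α(G) ≤ κ(G)` is expressed via a natural number `k` with `α(G) ≤ k` and such
that every vertex cut has at least `k` vertices. -/
theorem stmt_4 {V : Type*} [Fintype V] [DecidableEq V] (G : SimpleGraph V)
    (h3 : 3 ≤ Fintype.card V) (hconn : G.Connected) (k : ℕ)
    (hα : ∀ X : Set V, IsIndepSet G X → X.ncard ≤ k)
    (hκ : ∀ U : Set V, ¬ (G.induce Uᶜ).Connected → k ≤ U.ncard) :
    G.IsHamiltonian := by
  classical
  intro _
  have hV2 : 1 < Fintype.card V := by omega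
  -- Step A: a vertex with two distinct neighbours
  have hstar : ∃ (b xx yy : V), G.Adj b xx ∧ G.Adj b yy ∧ xx ≠ yy := by
    obtain ⟨a0, c0, hne⟩ := Fintype.exists_pair_of_one_lt_card hV2
    obtain ⟨p⟩ := hconn.preconnected a0 c0
    obtain ⟨z0, hadj0, q0, -⟩ := SimpleGraph.Walk.exists_eq_cons_of_ne hne p
    obtain ⟨d, hd1, hd2⟩ : ∃ d : V, d ≠ a0 ∧ d ≠ z0 := by
      by_contra hcon
      push_neg at hcon
      have hsub : (Finset.univ : Finset V) ⊆ {a0, z0} := by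
        intro y _
        by_cases hy : y = a0
        · simp [hy]
        · simp [hcon y hy]
      have h1 := Finset.card_le_card hsub
      have h2 : ({a0, z0} : Finset V).card ≤ 2 :=
        (Finset.card_insert_le _ _).trans (by simp)
      rw [Finset.card_univ] at h1
      omega
    obtain ⟨p1⟩ := hconn.preconnected a0 d
    obtain ⟨w1, hw1⟩ : ∃ w1 : G.Walk a0 d, w1.IsPath := ⟨p1.bypass, p1.bypass_isPath⟩
    obtain ⟨z1, hadj1, q1, hq1⟩ := SimpleGraph.Walk.exists_eq_cons_of_ne (Ne.symm hd1) w1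
    rw [hq1, SimpleGraph.Walk.cons_isPath_iff] at hw1
    by_cases hz1 : z1 = z0
    · subst hz1
      have hz1d : z1 ≠ d := fun h => hd2 h.symm
      obtain ⟨z2, hadj2, q2, hq2⟩ := SimpleGraph.Walk.exists_eq_cons_of_ne hz1d q1
      refine ⟨z1, a0, z2, hadj0.symm, hadj2, ?_⟩
      intro h
      apply hw1.2
      rw [hq2, SimpleGraph.Walk.support_cons, h]
      exact List.mem_cons_of_mem _ q2.start_mem_support
    · exact ⟨a0, z0, z1, hadj0, hadj1, fun h => hz1 h.symm⟩
  -- Step B: there exists a cycle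
  have hexCyc : ∃ (z : V) (N : G.Walk z z), N.IsCycle := by
    obtain ⟨b, xx, yy, hbx, hby, hxy⟩ := hstar
    by_cases hxyadj : G.Adj xx yy
    · refine ce_cycle_of_adj_path hbx hby hxy (SimpleGraph.Walk.cons hxyadj SimpleGraph.Walk.nil)
        ?_ ?_
      · rw [SimpleGraph.Walk.isPath_def]
        simp [hxyadj.ne]
      · simp only [SimpleGraph.Walk.support_cons, SimpleGraph.Walk.support_nil]
        intro hmem
        rcases List.mem_cons.mp hmem with h | h
        · exact hbx.ne h
        · rw [List.mem_singleton] at h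
          exact hby.ne h
    · have h2k : 2 ≤ k := by
        have hind : IsIndepSet G {xx, yy} := by
          intro aa haa bb hbb hne
          simp only [Set.mem_insert_iff, Set.mem_singleton_iff] at haa hbb
          rcases haa with rfl | rfl <;> rcases hbb with rfl | rfl
          · exact absurd rfl hne
          · exact hxyadj
          · exact fun h => hxyadj h.symm
          · exact absurd rfl hne
        have := hα _ hind
        rwa [Set.ncard_pair hxy] at this
      have hbcon : (G.induce ({b}ᶜ : Set V)).Connected := by
        by_contra hcon
        have := hκ {b} hcon
        rw [Set.ncard_singleton] at this
        omega
      have hxmem : xx ∈ ({b}ᶜ : Set V) := by simp [hbx.ne']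
      have hymem : yy ∈ ({b}ᶜ : Set V) := by simp [hby.ne']
      obtain ⟨w⟩ := hbcon.preconnected ⟨xx, hxmem⟩ ⟨yy, hymem⟩
      let f : G.induce ({b}ᶜ : Set V) →g G := ⟨Subtype.val, fun {p q} h => h⟩
      have hbP : b ∉ (w.map f).bypass.support := by
        intro hb
        have hmem := (w.map f).support_bypass_subset hb
        rw [SimpleGraph.Walk.support_map] at hmem
        obtain ⟨⟨y', hy'⟩, -, h⟩ := List.mem_map.mp hmem
        exact hy' h
      exact ce_cycle_of_adj_path hbx hby hxy (w.map f).bypass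
        ((w.map f).bypass_isPath) hbP
  -- Step C: a maximal cycle
  have hLbdd : BddAbove {l | ∃ (z : V) (N : G.Walk z z), N.IsCycle ∧ N.length = l} := by
    refine ⟨Fintype.card V, ?_⟩
    rintro l ⟨z, N, hN, rfl⟩
    have h1 : N.support.tail.Nodup := hN.support_nodup
    have h2 := h1.length_le_card
    have h3 : N.support.length = N.length + 1 := N.length_support
    have h4 : N.support.tail.length = N.support.length - 1 := by
      simp [List.length_tail]
    omega
  have hLne : {l | ∃ (z : V) (N : G.Walk z z), N.IsCycle ∧ N.length = l}.Nonempty := by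
    obtain ⟨z, N, hN⟩ := hexCyc
    exact ⟨N.length, z, N, hN, rfl⟩
  obtain ⟨x, C, hC, hClen⟩ := Nat.sSup_mem hLne hLbdd
  have hmax : ∀ (z : V) (N : G.Walk z z), N.IsCycle → N.length ≤ C.length := by
    intro z N hN
    rw [hClen]
    exact le_csSup hLbdd ⟨z, N, hN, rfl⟩
  by_cases hall : ∀ y : V, y ∈ C.support
  · refine ⟨x, C, ?_⟩
    rw [SimpleGraph.Walk.isHamiltonianCycle_iff_isCycle_and_support_count_tail_eq_one]
    exact ⟨hC, fun y => List.count_eq_one_of_mem hC.support_nodup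
      ((ce_mem_support_iff hC.not_nil).mp (hall y))⟩
  exfalso
  push_neg at hall
  obtain ⟨v, hv⟩ := hall
  -- the component of v outside C, and the attachment set S
  set W : Set V := {w | ∃ p : G.Walk v w, ∀ y ∈ p.support, y ∉ C.support} with hWdef
  set S : Set V := {s | s ∈ C.support ∧ ∃ h, h ∈ W ∧ G.Adj s h} with hSdef
  have hvW : v ∈ W := by
    refine ⟨SimpleGraph.Walk.nil, ?_⟩
    intro y hy
    rw [SimpleGraph.Walk.mem_support_nil_iff] at hy
    subst hy
    exact hv
  have hWC : ∀ w ∈ W, w ∉ C.support := by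
    rintro w ⟨p, hp⟩
    exact hp w p.end_mem_support
  have hWext : ∀ w ∈ W, ∀ y, G.Adj w y → y ∉ C.support → y ∈ W := by
    rintro w ⟨p, hp⟩ y hadj hy
    refine ⟨p.append (SimpleGraph.Walk.cons hadj SimpleGraph.Walk.nil), ?_⟩
    intro z hz
    rw [SimpleGraph.Walk.mem_support_append_iff] at hz
    rcases hz with hz | hz
    · exact hp z hz
    · simp only [SimpleGraph.Walk.support_cons, SimpleGraph.Walk.support_nil] at hz
      rcases List.mem_cons.mp hz with rfl | hz
      · exact hp z p.end_mem_support
      · rw [List.mem_singleton] at hz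
        subst hz
        exact hy
  have hSsub : ∀ s ∈ S, s ∈ C.support := fun s hs => hs.1
  have keyS : ∀ (a bb : V) (p : G.Walk a bb), a ∈ W → bb ∈ C.support → S.Nonempty := by
    intro a bb p
    induction p with
    | nil => intro ha hb; exact absurd hb (hWC _ ha)
    | @cons u u' w' hadj q ih =>
      intro ha hb
      by_cases hc : u' ∈ C.support
      · exact ⟨u', hc, u, ha, hadj.symm⟩
      · exact ih (hWext u ha u' hadj hc) hb
  have hSne : S.Nonempty := by
    obtain ⟨p⟩ := hconn.preconnected v x
    exact keyS v x p hvW C.start_mem_support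
  -- the successor function along C, via darts
  obtain ⟨d0, hd00, -⟩ := ce_exists_dart hC.not_nil C.start_mem_support
  have hdartex : ∀ s : V, ∃ d : G.Dart, s ∈ C.support → d ∈ C.darts ∧ d.fst = s := by
    intro s
    by_cases hs : s ∈ C.support
    · obtain ⟨d, hd, hfst⟩ := ce_exists_dart hC.not_nil hs
      exact ⟨d, fun _ => ⟨hd, hfst⟩⟩
    · exact ⟨d0, fun h => absurd h hs⟩
  choose dt hdt using hdartex
  have hsucc_adj : ∀ s, s ∈ C.support → G.Adj s (dt s).snd := by
    intro s hs
    have := (dt s).adj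
    rwa [(hdt s hs).2] at this
  have hsucc_memC : ∀ s, s ∈ C.support → (dt s).snd ∈ C.support :=
    fun s hs => C.dart_snd_mem_support_of_mem_darts (hdt s hs).1
  have hsucc_inj : ∀ s ∈ C.support, ∀ t ∈ C.support, (dt s).snd = (dt t).snd → s = t := by
    intro s hs t ht h
    have heq := ce_dart_snd_inj hC (hdt s hs).1 (hdt t ht).1 h
    rw [← (hdt s hs).2, ← (hdt t ht).2, heq]
  -- rotation decomposition at s
  have hrot : ∀ s (hs : s ∈ C.support), ∃ (hadj : G.Adj s (dt s).snd)
      (Q : G.Walk (dt s).snd s),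
      (SimpleGraph.Walk.cons hadj Q).IsCycle ∧
      (SimpleGraph.Walk.cons hadj Q).length = C.length ∧
      (∀ y, y ∈ (SimpleGraph.Walk.cons hadj Q).support ↔ y ∈ C.support) ∧
      (∀ d : G.Dart, d ∈ (SimpleGraph.Walk.cons hadj Q).darts → d ∈ C.darts) := by
    intro s hs
    have hKc : (C.rotate s hs).IsCycle := hC.rotate hs
    have hnn : ¬ (C.rotate s hs).Nil := hKc.not_nil
    obtain ⟨u, hadj, Q, hQ⟩ := SimpleGraph.Walk.not_nil_iff.mp hnn
    have hdartsC : ∀ d : G.Dart, d ∈ (C.rotate s hs).darts → d ∈ C.darts := by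
      intro d hd
      exact (C.rotate_darts s hs).perm.mem_iff.mp hd
    have hdmem : (⟨(s, u), hadj⟩ : G.Dart) ∈ (C.rotate s hs).darts := by
      rw [hQ, SimpleGraph.Walk.darts_cons]
      exact List.mem_cons_self
    have hu : u = (dt s).snd := by
      have heq := ce_dart_fst_inj hC (hdartsC _ hdmem) (hdt s hs).1 (by rw [(hdt s hs).2])
      have := congrArg (fun d : G.Dart => d.snd) heq
      simpa using this
    subst hu
    refine ⟨hadj, Q, ?_, ?_, ?_, ?_⟩
    · rw [← hQ]; exact hKc
    · rw [← hQ]; exact ce_length_rotate C hs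
    · intro y
      rw [← hQ]
      exact (ce_mem_support_iff hnn).trans
        ((C.support_rotate s hs).perm.mem_iff.trans (ce_mem_support_iff hC.not_nil).symm)
    · intro d hd
      rw [← hQ] at hd
      exact hdartsC d hd
  -- paths inside W
  have hWpath : ∀ h1 ∈ W, ∀ h2 ∈ W, ∃ P : G.Walk h1 h2, P.IsPath ∧
      ∀ y ∈ P.support, y ∉ C.support := by
    rintro h1 ⟨p1, hp1⟩ h2 ⟨p2, hp2⟩
    refine ⟨(p1.reverse.append p2).bypass, SimpleGraph.Walk.bypass_isPath _, ?_⟩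
    intro y hy
    have hmem := (p1.reverse.append p2).support_bypass_subset hy
    rw [SimpleGraph.Walk.mem_support_append_iff] at hmem
    rcases hmem with h | h
    · rw [SimpleGraph.Walk.support_reverse, List.mem_reverse] at h
      exact hp1 y h
    · exact hp2 y h
  -- Claim 1: successors of attachment vertices are not attachment vertices
  have claim1 : ∀ s ∈ S, (dt s).snd ∉ S := by
    rintro s ⟨hsC, h1, h1W, hadj1⟩ ⟨hs2C, h2, h2W, hadj2⟩
    obtain ⟨hadj, Q, hKc, hKlen, hKsup, -⟩ := hrot s hsC
    obtain ⟨P, hPp, hPC⟩ := hWpath h1 h1W h2 h2W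
    obtain ⟨z, N, hN, hNlen⟩ := ce_newcycle1 hadj Q hKc P hPp
      (fun y hy hyK => hPC y hy ((hKsup y).mp hyK)) hadj1 hadj2.symm
    have hle := hmax z N hN
    rw [SimpleGraph.Walk.length_cons] at hKlen
    omega
  -- Claim 2: successors of two attachment vertices are not adjacent
  have claim2 : ∀ s ∈ S, ∀ t ∈ S, s ≠ t → ¬ G.Adj (dt s).snd (dt t).snd := by
    rintro s hsS t htS hst hadjst
    obtain ⟨hsC, h1, h1W, hadj1⟩ := hsS
    obtain ⟨htC, h2, h2W, hadj2⟩ := htS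
    obtain ⟨hadj, Q, hKc, hKlen, hKsup, hKdarts⟩ := hrot s hsC
    have htK : t ∈ (SimpleGraph.Walk.cons hadj Q).support := (hKsup t).mpr htC
    have hts : t ≠ s := hst.symm
    have htQ : t ∈ Q.support := by
      rw [SimpleGraph.Walk.support_cons] at htK
      rcases List.mem_cons.mp htK with h | h
      · exact absurd h hts
      · exact h
    obtain ⟨u, htu, R, hA2⟩ :=
      SimpleGraph.Walk.exists_eq_cons_of_ne hts (Q.dropUntil t htQ)
    have hu : u = (dt t).snd := by
      have hdmem : (⟨(t, u), htu⟩ : G.Dart) ∈ C.darts := by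
        apply hKdarts
        rw [SimpleGraph.Walk.darts_cons]
        refine List.mem_cons_of_mem _ ?_
        refine Q.darts_dropUntil_subset htQ ?_
        rw [hA2, SimpleGraph.Walk.darts_cons]
        exact List.mem_cons_self
      have heq := ce_dart_fst_inj hC hdmem (hdt t htC).1 (by rw [(hdt t htC).2])
      have := congrArg (fun d : G.Dart => d.snd) heq
      simpa using this
    subst hu
    have hQeq : Q = (Q.takeUntil t htQ).append
        (SimpleGraph.Walk.cons htu R) := by
      conv_lhs => rw [← Q.take_spec htQ]
      rw [hA2]
    rw [hQeq] at hKc hKlen hKsup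
    have htb : t ≠ (dt s).snd := by
      intro h
      exact claim1 s ⟨hsC, h1, h1W, hadj1⟩ (h ▸ ⟨htC, h2, h2W, hadj2⟩)
    obtain ⟨P, hPp, hPC⟩ := hWpath h2 h2W h1 h1W
    obtain ⟨z, N, hN, hNlen⟩ := ce_newcycle2 hadj (Q.takeUntil t htQ) htu R hKc P hPp
      (fun y hy hyK => hPC y hy ((hKsup y).mp hyK)) hadj1.symm hadj2 hadjst.symm hts htb
    have hle := hmax z N hN
    rw [hKlen] at hNlen
    omega
  -- Claim 3: v is not adjacent to any successor
  have claim3 : ∀ s ∈ S, ¬ G.Adj v (dt s).snd := by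
    rintro s hsS hadjv
    exact claim1 s hsS ⟨hsucc_memC s hsS.1, v, hvW, hadjv.symm⟩
  -- The independent set
  have hXindep : IsIndepSet G (((fun s => (dt s).snd) '' S) ∪ {v}) := by
    rintro aa haa bb hbb hne
    rcases Set.mem_union _ _ _ |>.mp haa with haa' | haa' <;>
      rcases Set.mem_union _ _ _ |>.mp hbb with hbb' | hbb'
    · obtain ⟨s, hsS, rfl⟩ := haa'
      obtain ⟨t, htS, rfl⟩ := hbb'
      have hst : s ≠ t := fun h => hne (by rw [h])
      exact claim2 s hsS t htS hst
    · obtain ⟨s, hsS, rfl⟩ := haa'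
      rw [Set.mem_singleton_iff] at hbb'
      subst hbb'
      exact fun h => claim3 s hsS h.symm
    · obtain ⟨t, htS, rfl⟩ := hbb'
      rw [Set.mem_singleton_iff] at haa'
      subst haa'
      exact claim3 t htS
    · rw [Set.mem_singleton_iff] at haa' hbb'
      exact absurd (haa'.trans hbb'.symm) hne
  have hXcard : (((fun s => (dt s).snd) '' S) ∪ {v}).ncard = S.ncard + 1 := by
    have hvim : v ∉ (fun s => (dt s).snd) '' S := by
      rintro ⟨s, hsS, h⟩
      exact hv (h ▸ hsucc_memC s hsS.1)
    rw [Set.ncard_union_eq (Set.disjoint_singleton_right.mpr hvim)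
      (Set.toFinite _) (Set.toFinite _), Set.ncard_singleton,
      Set.ncard_image_of_injOn (fun s hs t ht h => hsucc_inj s hs.1 t ht.1 h)]
  -- The cut argument
  obtain ⟨s0, hs0⟩ := hSne
  have hc0C : (dt s0).snd ∈ C.support := hsucc_memC s0 hs0.1
  have hc0S : (dt s0).snd ∉ S := claim1 s0 hs0
  have hvS : v ∉ S := fun h => hv (hSsub v h)
  have hdisc : ¬ (G.induce (Sᶜ : Set V)).Connected := by
    intro hcon
    obtain ⟨w⟩ := hcon.preconnected ⟨v, hvS⟩ ⟨(dt s0).snd, hc0S⟩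
    let f : G.induce (Sᶜ : Set V) →g G := ⟨Subtype.val, fun {p q} h => h⟩
    have hwS : ∀ y ∈ (w.map f).support, y ∉ S := by
      intro y hy
      rw [SimpleGraph.Walk.support_map] at hy
      obtain ⟨⟨y', hy'⟩, -, rfl⟩ := List.mem_map.mp hy
      exact hy'
    have key2 : ∀ (a bb : V) (p : G.Walk a bb), a ∈ W → bb ∈ C.support →
        (∀ y ∈ p.support, y ∉ S) → False := by
      intro a bb p
      induction p with
      | nil => intro ha hb _; exact hWC _ ha hb
      | @cons u u' w' hadj q ih =>
        intro ha hb hS'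
        by_cases hc : u' ∈ C.support
        · exact hS' u'
            (by rw [SimpleGraph.Walk.support_cons];
                exact List.mem_cons_of_mem _ q.start_mem_support)
            ⟨hc, u, ha, hadj.symm⟩
        · exact ih (hWext u ha u' hadj hc) hb
            (fun y hy => hS' y
              (by rw [SimpleGraph.Walk.support_cons]; exact List.mem_cons_of_mem _ hy))
    exact key2 v (dt s0).snd (w.map f) hvW hc0C hwS
  have hk1 : k ≤ S.ncard := hκ S hdisc
  have hk2 : (((fun s => (dt s).snd) '' S) ∪ {v}).ncard ≤ k := hα _ hXindep
  omega
end
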